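/- In a one-dimensional BVASS, a state q has unbounded reachability set if and only if reach(q) contains some n > 2^{|Q|}. -/

import Mathlib

/-- A one-dimensional branching vector addition system with states:
branching transitions `br`, unary transitions `un` with update in `{-1,0,1}`,
and final states `final`. -/
structure BVASS1 (Q : Type) where
  br : Q → Q → Q → Prop
  un : Q → ℤ → Q → Prop
  un_small : ∀ q z p, un q z p → z = -1 ∨ z = 0 ∨ z = 1
  final : Q → Prop

/-- A finite binary tree with nodes given by a prefix-closed set of words over
`Bool` and labels in `Q × ℕ`. -/
structure BTree (Q : Type) where
  dom : Set (List Bool)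
  label : List Bool → Q × ℕ
  finite : dom.Finite
  root_mem : ([] : List Bool) ∈ dom
  prefixClosed : ∀ ⦃u v : List Bool⦄, v ∈ dom → u <+: v → u ∈ dom

/-- `u` is a strict ancestor of `v`. -/
def StrictPrefix (u v : List Bool) : Prop := u <+: v ∧ u ≠ v

/-- `u` is the lowest common ancestor of `v` and `w`. -/
def IsLCA (u v w : List Bool) : Prop :=
  u <+: v ∧ u <+: w ∧ ∀ u', u' <+: v → u' <+: w → u' <+: u

namespace BTree

variable {Q : Type}

def state (T : BTree Q) (u : List Bool) : Q := (T.label u).1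

def counter (T : BTree Q) (u : List Bool) : ℕ := (T.label u).2

def IsLeaf (T : BTree Q) (u : List Bool) : Prop :=
  u ∈ T.dom ∧ ∀ b : Bool, u ++ [b] ∉ T.dom

/-- The subtree of `T` rooted at node `u`. -/
def subtree (T : BTree Q) (u : List Bool) (hu : u ∈ T.dom) : BTree Q where
  dom := {x | u ++ x ∈ T.dom}
  label := fun x => T.label (u ++ x)
  finite := Set.Finite.preimage
    (Function.Injective.injOn fun a b h => by simpa using h) T.finite
  root_mem := by simpa using hu
  prefixClosed := by
    rintro a c hc ⟨t, rfl⟩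
    exact T.prefixClosed hc ⟨t, by simp⟩

/-- All counter values in the tree are at most `j`. -/
def Bounded (T : BTree Q) (j : ℕ) : Prop := ∀ u ∈ T.dom, T.counter u ≤ j

/-- All counter values, except possibly the root's, are at most `j`. -/
def AlmostBounded (T : BTree Q) (j : ℕ) : Prop :=
  ∀ u ∈ T.dom, u ≠ [] → T.counter u ≤ j

/-- A node is increasing if it has a strict ancestor with the same state
and a strictly smaller counter value. -/
def Increasing (T : BTree Q) (v : List Bool) : Prop :=
  ∃ u ∈ T.dom, StrictPrefix u v ∧ T.state u = T.state v ∧ T.counter u < T.counter v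

/-- `u` is the anchor of the increasing node `v`: the maximal strict ancestor of `v`
with the same state and strictly smaller counter value. -/
def IsAnchorOf (T : BTree Q) (u v : List Bool) : Prop :=
  u ∈ T.dom ∧ StrictPrefix u v ∧ T.state u = T.state v ∧ T.counter u < T.counter v ∧
    ∀ u' ∈ T.dom, StrictPrefix u' v → T.state u' = T.state v →
      T.counter u' < T.counter v → u' <+: u

/-- The tree is exclusive: the least common ancestor of any two distinct increasing
leaves is a strict ancestor of at least one of their anchors. -/
def Exclusive (T : BTree Q) : Prop :=
  ∀ v w, T.IsLeaf v → T.IsLeaf w → T.Increasing v → T.Increasing w → v ≠ w →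
    ∀ a b l, T.IsAnchorOf a v → T.IsAnchorOf b w → IsLCA l v w →
      StrictPrefix l a ∨ StrictPrefix l b

end BTree

namespace BVASS1

variable {Q : Type}

/-- `T` is a partial reachability tree of `B`: at every inner node either a
branching transition splits the counter over two children, or a unary transition
changes the counter by `z` along a single-child edge. -/
def IsPRT (B : BVASS1 Q) (T : BTree Q) : Prop :=
  ∀ u ∈ T.dom, ¬ T.IsLeaf u →
    ((u ++ [false] ∈ T.dom ∧ u ++ [true] ∈ T.dom ∧
        B.br (T.state u) (T.state (u ++ [false])) (T.state (u ++ [true])) ∧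
        T.counter u = T.counter (u ++ [false]) + T.counter (u ++ [true])) ∨
     (u ++ [false] ∈ T.dom ∧ u ++ [true] ∉ T.dom ∧
        ∃ z : ℤ, B.un (T.state u) z (T.state (u ++ [false])) ∧
          (T.counter (u ++ [false]) : ℤ) = (T.counter u : ℤ) + z))

/-- `T` is a (full) reachability tree of `B`: a partial reachability tree all of
whose leaves are accepting (final state, counter zero). -/
def IsRT (B : BVASS1 Q) (T : BTree Q) : Prop :=
  B.IsPRT T ∧ ∀ u, T.IsLeaf u → B.final (T.state u) ∧ T.counter u = 0

/-- The configuration `q(n)` is reachable. -/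
def Reachable (B : BVASS1 Q) (q : Q) (n : ℕ) : Prop :=
  ∃ T : BTree Q, B.IsRT T ∧ T.label [] = (q, n)

/-- The reachability set of a control state. -/
def reachSet (B : BVASS1 Q) (q : Q) : Set ℕ := {n | B.Reachable q n}

/-- The configuration `q(n)` is coverable. -/
def Coverable (B : BVASS1 Q) (q : Q) (n : ℕ) : Prop :=
  ∃ m, n ≤ m ∧ B.Reachable q m

/-- `T` is expandable: exclusive, every leaf is accepting or increasing, and every
increasing leaf with its anchor induces a positive residue-reachability instance. -/
def Expandable (B : BVASS1 Q) (T : BTree Q) : Prop :=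
  T.Exclusive ∧
  (∀ v, T.IsLeaf v → (B.final (T.state v) ∧ T.counter v = 0) ∨ T.Increasing v) ∧
  (∀ v u, T.IsLeaf v → T.IsAnchorOf u v →
    ∃ l, B.Reachable (T.state v) l ∧ T.counter v ≤ l ∧
      l ≡ T.counter v [MOD T.counter v - T.counter u])

end BVASS1

namespace Stmt6Aux

variable {Q : Type}

lemma prefix_antisymm' {x u : List Bool} (h : x <+: u) (h' : u <+: x) : x = u :=
  h.eq_of_length_le h'.length_le

lemma sp_length_lt {a b : List Bool} (h : StrictPrefix a b) : a.length < b.length :=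
  lt_of_le_of_ne h.1.length_le fun he => h.2 (h.1.eq_of_length he)

lemma sp_trans {a b c : List Bool} (h1 : StrictPrefix a b) (h2 : StrictPrefix b c) :
    StrictPrefix a c := by
  refine ⟨h1.1.trans h2.1, fun he => ?_⟩
  have h3 := sp_length_lt h1
  have h4 := sp_length_lt h2
  rw [he] at h3
  omega

lemma sp_append_singleton (w : List Bool) (b : Bool) : StrictPrefix w (w ++ [b]) := by
  refine ⟨List.prefix_append w [b], fun h => ?_⟩
  have := congrArg List.length h
  simp only [List.length_append, List.length_cons, List.length_nil] at this
  omega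

lemma append_singleton_inj {x : List Bool} {a b : Bool} (h : x ++ [a] = x ++ [b]) : a = b := by
  simpa using h

/-- Graft the tree `S` (with counter shift `e` along the path to `u`) at node `u` of `T`. -/
def graft (T : BTree Q) (u : List Bool) (S : BTree Q) (e : ℕ) (hu : u ∈ T.dom) : BTree Q where
  dom := {x | if u <+: x then x.drop u.length ∈ S.dom else x ∈ T.dom}
  label := fun x =>
    if u <+: x then S.label (x.drop u.length)
    else if x <+: u then (T.state x, T.counter x + e) else T.label x
  finite := by
    apply (T.finite.union (S.finite.image (u ++ ·))).subset
    intro x hx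
    simp only [Set.mem_setOf_eq] at hx
    split at hx
    · next h => exact Or.inr ⟨x.drop u.length, hx, List.prefix_iff_eq_append.1 h⟩
    · exact Or.inl hx
  root_mem := by
    simp only [Set.mem_setOf_eq]
    split
    · next h =>
      obtain rfl : u = [] := List.prefix_nil.mp h
      simpa using S.root_mem
    · exact T.root_mem
  prefixClosed := by
    intro a b hb hab
    simp only [Set.mem_setOf_eq] at hb ⊢
    by_cases ha : u <+: a
    · have hub : u <+: b := ha.trans hab
      rw [if_pos ha]
      rw [if_pos hub] at hb
      obtain ⟨s, rfl⟩ := ha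
      obtain ⟨t, rfl⟩ := hab
      rw [List.append_assoc, List.drop_left] at hb
      rw [List.drop_left]
      exact S.prefixClosed hb ⟨t, rfl⟩
    · rw [if_neg ha]
      by_cases hub : u <+: b
      · rcases List.prefix_or_prefix_of_prefix hab hub with h | h
        · exact T.prefixClosed hu h
        · exact absurd h ha
      · rw [if_neg hub] at hb
        exact T.prefixClosed hb hab

variable {T S : BTree Q} {u : List Bool} {e : ℕ} {hu : u ∈ T.dom}

lemma graft_mem_pre {x : List Bool} (h : u <+: x) :
    x ∈ (graft T u S e hu).dom ↔ x.drop u.length ∈ S.dom := by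
  simp only [graft, Set.mem_setOf_eq]
  rw [if_pos h]

lemma graft_mem_not {x : List Bool} (h : ¬ u <+: x) :
    x ∈ (graft T u S e hu).dom ↔ x ∈ T.dom := by
  simp only [graft, Set.mem_setOf_eq]
  rw [if_neg h]

lemma graft_lab_pre {x : List Bool} (h : u <+: x) :
    (graft T u S e hu).label x = S.label (x.drop u.length) := by
  simp only [graft]
  rw [if_pos h]

lemma graft_lab_anc (hst : S.state [] = T.state u) (hct : S.counter [] = T.counter u + e)
    {x : List Bool} (h : x <+: u) :
    (graft T u S e hu).label x = (T.state x, T.counter x + e) := by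
  by_cases h' : u <+: x
  · obtain rfl : x = u := prefix_antisymm' h h'
    rw [graft_lab_pre h', List.drop_length]
    have hS : S.label [] = (S.state [], S.counter []) := rfl
    rw [hS, hst, hct]
  · simp only [graft]
    rw [if_neg h', if_pos h]

lemma graft_mem_anc {x : List Bool} (h : x <+: u) : x ∈ (graft T u S e hu).dom := by
  by_cases h' : u <+: x
  · refine (graft_mem_pre h').2 ?_
    obtain rfl : x = u := prefix_antisymm' h h'
    rw [List.drop_length]
    exact S.root_mem
  · exact (graft_mem_not h').2 (T.prefixClosed hu h)

lemma graft_root_label (hst : S.state [] = T.state u) (hct : S.counter [] = T.counter u + e) :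
    (graft T u S e hu).label [] = (T.state [], T.counter [] + e) :=
  graft_lab_anc hst hct ⟨u, rfl⟩

lemma graft_isRT {B : BVASS1 Q} (hT : B.IsRT T) (hS : B.IsRT S)
    (hst : S.state [] = T.state u) (hct : S.counter [] = T.counter u + e) :
    B.IsRT (graft T u S e hu) := by
  set G := graft T u S e hu with hG
  have stpre : ∀ {x : List Bool}, u <+: x → G.state x = S.state (x.drop u.length) :=
    fun h => congrArg Prod.fst (graft_lab_pre h)
  have ctpre : ∀ {x : List Bool}, u <+: x → G.counter x = S.counter (x.drop u.length) :=
    fun h => congrArg Prod.snd (graft_lab_pre h)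
  have stanc : ∀ {x : List Bool}, x <+: u → G.state x = T.state x := by
    intro x h
    show (G.label x).1 = _
    rw [graft_lab_anc hst hct h]
  have ctanc : ∀ {x : List Bool}, x <+: u → G.counter x = T.counter x + e := by
    intro x h
    show (G.label x).2 = _
    rw [graft_lab_anc hst hct h]
  have labinc : ∀ {x : List Bool}, ¬ u <+: x → ¬ x <+: u → G.label x = T.label x := by
    intro x h1 h2
    simp only [hG, graft]
    rw [if_neg h1, if_neg h2]
  constructor
  · -- partial reachability tree property
    intro x hx hleaf
    by_cases hpre : u <+: x
    · -- inside the grafted copy of S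
      obtain ⟨y, rfl⟩ := hpre
      have hdy : (u ++ y).drop u.length = y := List.drop_left
      have hyS : y ∈ S.dom := by
        have := (graft_mem_pre (List.prefix_append u y)).1 hx
        rwa [hdy] at this
      have hcass : ∀ b : Bool, (u ++ y) ++ [b] = u ++ (y ++ [b]) :=
        fun b => List.append_assoc u y [b]
      have hmemc : ∀ b : Bool, ((u ++ y) ++ [b] ∈ G.dom ↔ y ++ [b] ∈ S.dom) := by
        intro b
        rw [hcass b, graft_mem_pre (List.prefix_append _ _), List.drop_left]
      have hstc : ∀ b : Bool, G.state ((u ++ y) ++ [b]) = S.state (y ++ [b]) := by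
        intro b
        rw [hcass b, stpre (List.prefix_append _ _), List.drop_left]
      have hctc : ∀ b : Bool, G.counter ((u ++ y) ++ [b]) = S.counter (y ++ [b]) := by
        intro b
        rw [hcass b, ctpre (List.prefix_append _ _), List.drop_left]
      have hstx : G.state (u ++ y) = S.state y := by
        rw [stpre (List.prefix_append u y), hdy]
      have hctx : G.counter (u ++ y) = S.counter y := by
        rw [ctpre (List.prefix_append u y), hdy]
      have hnlS : ¬ S.IsLeaf y := by
        intro hl
        exact hleaf ⟨hx, fun b hb => hl.2 b ((hmemc b).1 hb)⟩
      rcases hS.1 y hyS hnlS with ⟨hf, ht, hbr, hsum⟩ | ⟨hf, ht, z, hz, heq⟩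
      · left
        refine ⟨(hmemc false).2 hf, (hmemc true).2 ht, ?_, ?_⟩
        · rw [hstx, hstc false, hstc true]; exact hbr
        · rw [hctx, hctc false, hctc true]; exact hsum
      · right
        refine ⟨(hmemc false).2 hf, fun hm => ht ((hmemc true).1 hm), z, ?_, ?_⟩
        · rw [hstx, hstc false]; exact hz
        · rw [hctx, hctc false]; exact heq
    · by_cases hxu : x <+: u
      · -- x is a strict ancestor of u
        have hne : x ≠ u := fun h => hpre (h ▸ List.prefix_refl u)
        obtain ⟨r, hr⟩ := hxu
        rcases r with _ | ⟨b₀, r'⟩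
        · exact absurd (by simpa using hr) hne
        have hchild0 : x ++ [b₀] <+: u :=
          ⟨r', by rw [List.append_assoc, List.singleton_append, hr]⟩
        have hxu' : x <+: u := ⟨b₀ :: r', hr⟩
        have hxT : x ∈ T.dom := T.prefixClosed hu hxu'
        have hx0T : x ++ [b₀] ∈ T.dom := T.prefixClosed hu hchild0
        have hnlT : ¬ T.IsLeaf x := fun hl => hl.2 b₀ hx0T
        have hsibnot : ∀ b : Bool, b ≠ b₀ → ¬ u <+: x ++ [b] := by
          intro b hb h
          have h2 : x ++ [b₀] <+: x ++ [b] := hchild0.trans h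
          have h3 := h2.eq_of_length_le (by simp)
          exact hb (append_singleton_inj h3).symm
        have hsibnot2 : ∀ b : Bool, b ≠ b₀ → ¬ (x ++ [b]) <+: u := by
          intro b hb h
          rcases List.prefix_or_prefix_of_prefix h hchild0 with h2 | h2
          · exact hb (append_singleton_inj (h2.eq_of_length_le (by simp)))
          · exact hb (append_singleton_inj (h2.eq_of_length_le (by simp))).symm
        have hsiblab : ∀ b : Bool, b ≠ b₀ → G.label (x ++ [b]) = T.label (x ++ [b]) :=
          fun b hb => labinc (hsibnot b hb) (hsibnot2 b hb)
        have hsibmem : ∀ b : Bool, b ≠ b₀ → ((x ++ [b]) ∈ G.dom ↔ (x ++ [b]) ∈ T.dom) :=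
          fun b hb => graft_mem_not (hsibnot b hb)
        rcases hT.1 x hxT hnlT with ⟨hf, ht, hbr, hsum⟩ | ⟨hf, ht, z, hz, heq⟩
        · left
          cases b₀
          · -- path child is `false`
            have hlt : (true : Bool) ≠ false := by simp
            refine ⟨graft_mem_anc hchild0, (hsibmem true hlt).2 ht, ?_, ?_⟩
            · rw [stanc hxu', stanc hchild0,
                show G.state (x ++ [true]) = T.state (x ++ [true]) from
                  congrArg Prod.fst (hsiblab true hlt)]
              exact hbr
            · rw [ctanc hxu', ctanc hchild0,
                show G.counter (x ++ [true]) = T.counter (x ++ [true]) from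
                  congrArg Prod.snd (hsiblab true hlt)]
              omega
          · -- path child is `true`
            have hlf : (false : Bool) ≠ true := by simp
            refine ⟨(hsibmem false hlf).2 hf, graft_mem_anc hchild0, ?_, ?_⟩
            · rw [stanc hxu', stanc hchild0,
                show G.state (x ++ [false]) = T.state (x ++ [false]) from
                  congrArg Prod.fst (hsiblab false hlf)]
              exact hbr
            · rw [ctanc hxu', ctanc hchild0,
                show G.counter (x ++ [false]) = T.counter (x ++ [false]) from
                  congrArg Prod.snd (hsiblab false hlf)]
              omega
        · right
          cases b₀
          · have hlt : (true : Bool) ≠ false := by simp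
            refine ⟨graft_mem_anc hchild0,
              fun hm => ht ((hsibmem true hlt).1 hm), z, ?_, ?_⟩
            · rw [stanc hxu', stanc hchild0]
              exact hz
            · rw [ctanc hxu', ctanc hchild0]
              push_cast
              linarith
          · exact absurd hx0T ht
      · -- x is incomparable with u
        have hxT : x ∈ T.dom := (graft_mem_not hpre).1 hx
        have hkey1 : ∀ b : Bool, ¬ u <+: x ++ [b] := by
          intro b h
          rcases List.prefix_or_prefix_of_prefix h (List.prefix_append x [b]) with h2 | h2
          · exact hpre h2
          · exact hxu h2
        have hkey2 : ∀ b : Bool, ¬ (x ++ [b]) <+: u :=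
          fun b h => hxu ((List.prefix_append x [b]).trans h)
        have hmemc : ∀ b : Bool, ((x ++ [b]) ∈ G.dom ↔ (x ++ [b]) ∈ T.dom) :=
          fun b => graft_mem_not (hkey1 b)
        have hlabc : ∀ b : Bool, G.label (x ++ [b]) = T.label (x ++ [b]) :=
          fun b => labinc (hkey1 b) (hkey2 b)
        have hlabx : G.label x = T.label x := labinc hpre hxu
        have hnlT : ¬ T.IsLeaf x := by
          intro hl
          exact hleaf ⟨hx, fun b hb => hl.2 b ((hmemc b).1 hb)⟩
        have hstx : G.state x = T.state x := congrArg Prod.fst hlabx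
        have hctx : G.counter x = T.counter x := congrArg Prod.snd hlabx
        have hstc : ∀ b : Bool, G.state (x ++ [b]) = T.state (x ++ [b]) :=
          fun b => congrArg Prod.fst (hlabc b)
        have hctc : ∀ b : Bool, G.counter (x ++ [b]) = T.counter (x ++ [b]) :=
          fun b => congrArg Prod.snd (hlabc b)
        rcases hT.1 x hxT hnlT with ⟨hf, ht, hbr, hsum⟩ | ⟨hf, ht, z, hz, heq⟩
        · left
          refine ⟨(hmemc false).2 hf, (hmemc true).2 ht, ?_, ?_⟩
          · rw [hstx, hstc false, hstc true]; exact hbr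
          · rw [hctx, hctc false, hctc true]; exact hsum
        · right
          refine ⟨(hmemc false).2 hf, fun hm => ht ((hmemc true).1 hm), z, ?_, ?_⟩
          · rw [hstx, hstc false]; exact hz
          · rw [hctx, hctc false]; exact heq
  · -- all leaves are accepting
    intro x hlx
    obtain ⟨hx, hnc⟩ := hlx
    by_cases hpre : u <+: x
    · obtain ⟨y, rfl⟩ := hpre
      have hdy : (u ++ y).drop u.length = y := List.drop_left
      have hyS : y ∈ S.dom := by
        have := (graft_mem_pre (List.prefix_append u y)).1 hx
        rwa [hdy] at this
      have hmemc : ∀ b : Bool, ((u ++ y) ++ [b] ∈ G.dom ↔ y ++ [b] ∈ S.dom) := by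
        intro b
        rw [List.append_assoc u y [b], graft_mem_pre (List.prefix_append _ _), List.drop_left]
      have hSl : S.IsLeaf y := ⟨hyS, fun b hb => hnc b ((hmemc b).2 hb)⟩
      have hacc := hS.2 y hSl
      constructor
      · rw [stpre (List.prefix_append u y), hdy]
        exact hacc.1
      · rw [ctpre (List.prefix_append u y), hdy]
        exact hacc.2
    · by_cases hxu : x <+: u
      · -- impossible: x has a child toward u
        have hne : x ≠ u := fun h => hpre (h ▸ List.prefix_refl u)
        obtain ⟨r, hr⟩ := hxu
        rcases r with _ | ⟨b₀, r'⟩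
        · exact absurd (by simpa using hr) hne
        have hchild0 : x ++ [b₀] <+: u :=
          ⟨r', by rw [List.append_assoc, List.singleton_append, hr]⟩
        exact absurd (graft_mem_anc hchild0) (hnc b₀)
      · have hxT : x ∈ T.dom := (graft_mem_not hpre).1 hx
        have hkey1 : ∀ b : Bool, ¬ u <+: x ++ [b] := by
          intro b h
          rcases List.prefix_or_prefix_of_prefix h (List.prefix_append x [b]) with h2 | h2
          · exact hpre h2
          · exact hxu h2
        have hmemc : ∀ b : Bool, ((x ++ [b]) ∈ G.dom ↔ (x ++ [b]) ∈ T.dom) :=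
          fun b => graft_mem_not (hkey1 b)
        have hTl : T.IsLeaf x := ⟨hxT, fun b hb => hnc b ((hmemc b).2 hb)⟩
        have hacc := hT.2 x hTl
        have hlabx : G.label x = T.label x := labinc hpre hxu
        constructor
        · rw [show G.state x = T.state x from congrArg Prod.fst hlabx]
          exact hacc.1
        · rw [show G.counter x = T.counter x from congrArg Prod.snd hlabx]
          exact hacc.2

lemma subtree_isRT {B : BVASS1 Q} {T : BTree Q} (hT : B.IsRT T) {v : List Bool}
    (hv : v ∈ T.dom) : B.IsRT (T.subtree v hv) := by
  constructor
  · intro x hx hnl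
    have hx' : v ++ x ∈ T.dom := hx
    have hnl' : ¬ T.IsLeaf (v ++ x) := by
      intro hl
      refine hnl ⟨hx, fun b hb => hl.2 b ?_⟩
      rw [List.append_assoc]
      exact hb
    have hc1 : ∀ b : Bool, (v ++ x) ++ [b] ∈ T.dom → x ++ [b] ∈ (T.subtree v hv).dom := by
      intro b hb
      show v ++ (x ++ [b]) ∈ T.dom
      rw [← List.append_assoc]
      exact hb
    have hc2 : ∀ b : Bool, x ++ [b] ∈ (T.subtree v hv).dom → (v ++ x) ++ [b] ∈ T.dom := by
      intro b hb
      rw [List.append_assoc]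
      exact hb
    have hstc : ∀ b : Bool, (T.subtree v hv).state (x ++ [b]) = T.state ((v ++ x) ++ [b]) := by
      intro b
      rw [List.append_assoc]
      rfl
    have hctc : ∀ b : Bool, (T.subtree v hv).counter (x ++ [b]) = T.counter ((v ++ x) ++ [b]) := by
      intro b
      rw [List.append_assoc]
      rfl
    have hst0 : (T.subtree v hv).state x = T.state (v ++ x) := rfl
    have hct0 : (T.subtree v hv).counter x = T.counter (v ++ x) := rfl
    rcases hT.1 (v ++ x) hx' hnl' with ⟨hf, ht, hbr, hsum⟩ | ⟨hf, ht, z, hz, heq⟩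
    · left
      refine ⟨hc1 false hf, hc1 true ht, ?_, ?_⟩
      · rw [hst0, hstc false, hstc true]; exact hbr
      · rw [hct0, hctc false, hctc true]; exact hsum
    · right
      refine ⟨hc1 false hf, fun hm => ht (hc2 true hm), z, ?_, ?_⟩
      · rw [hst0, hstc false]; exact hz
      · rw [hct0, hctc false]; exact heq
  · intro x hlx
    have hTl : T.IsLeaf (v ++ x) := by
      refine ⟨hlx.1, fun b hb => hlx.2 b ?_⟩
      show v ++ (x ++ [b]) ∈ T.dom
      rw [← List.append_assoc]
      exact hb
    exact hT.2 _ hTl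

lemma descend {B : BVASS1 Q} :
    ∀ (n : ℕ) (T : BTree Q), B.IsRT T → ∀ w ∈ T.dom, ∀ c : ℕ, 1 ≤ c → c ≤ T.counter w →
      (∀ x ∈ T.dom, x.length ≤ w.length + n) →
      ∃ v ∈ T.dom, StrictPrefix w v ∧ T.counter v < c ∧
        (c ≤ T.counter v + 1 ∨ c ≤ 2 * T.counter v) := by
  intro n
  induction n with
  | zero =>
    intro T hT w hw c hc hcw hlen
    have hleaf : T.IsLeaf w := by
      refine ⟨hw, fun b hb => ?_⟩
      have := hlen _ hb
      simp only [List.length_append, List.length_cons, List.length_nil, Nat.add_zero] at this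
      omega
    have := (hT.2 w hleaf).2
    omega
  | succ n ih =>
    intro T hT w hw c hc hcw hlen
    by_cases hleaf : T.IsLeaf w
    · have := (hT.2 w hleaf).2
      omega
    · rcases hT.1 w hw hleaf with ⟨hf, ht, _, hsum⟩ | ⟨hf, ht, z, hz, heq⟩
      · obtain ⟨b, hmem, h2⟩ : ∃ b : Bool, w ++ [b] ∈ T.dom ∧ c ≤ 2 * T.counter (w ++ [b]) := by
          rcases le_total (T.counter (w ++ [false])) (T.counter (w ++ [true])) with h | h
          · exact ⟨true, ht, by omega⟩
          · exact ⟨false, hf, by omega⟩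
        by_cases hlt : T.counter (w ++ [b]) < c
        · exact ⟨w ++ [b], hmem, sp_append_singleton w b, hlt, Or.inr h2⟩
        · push_neg at hlt
          obtain ⟨v, hv, hsp, h3, h4⟩ := ih T hT (w ++ [b]) hmem c hc hlt
            (fun x hx => by
              have := hlen x hx
              simp only [List.length_append, List.length_cons, List.length_nil]
              omega)
          exact ⟨v, hv, sp_trans (sp_append_singleton w b) hsp, h3, h4⟩
      · rcases B.un_small _ _ _ hz with rfl | rfl | rfl <;>
        · by_cases hlt : T.counter (w ++ [false]) < c
          · refine ⟨w ++ [false], hf, sp_append_singleton w false, hlt, Or.inl ?_⟩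
            omega
          · push_neg at hlt
            obtain ⟨v, hv, hsp, h3, h4⟩ := ih T hT (w ++ [false]) hf c hc hlt
              (fun x hx => by
                have := hlen x hx
                simp only [List.length_append, List.length_cons, List.length_nil]
                omega)
            exact ⟨v, hv, sp_trans (sp_append_singleton w false) hsp, h3, h4⟩

lemma chain {B : BVASS1 Q} :
    ∀ (k : ℕ) (T : BTree Q), B.IsRT T → 2 ^ k < T.counter [] →
      ∃ w : ℕ → List Bool, w 0 = [] ∧ (∀ i, i ≤ k → w i ∈ T.dom) ∧
        (∀ i, i < k → StrictPrefix (w i) (w (i + 1)) ∧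
          T.counter (w (i + 1)) < T.counter (w i)) := by
  intro k
  induction k with
  | zero =>
    intro T hT h
    exact ⟨fun _ => [], rfl, fun i _ => T.root_mem, fun i hi => absurd hi (by omega)⟩
  | succ k ih =>
    intro T hT h
    obtain ⟨N, hN⟩ := (T.finite.image List.length).bddAbove
    have hlen : ∀ x ∈ T.dom, x.length ≤ ([] : List Bool).length + N := by
      intro x hx
      simpa using hN ⟨x, hx, rfl⟩
    have hpow : 0 < (2 : ℕ) ^ (k + 1) := pow_pos (by norm_num) _
    obtain ⟨v, hv, hsp, hlt, hbd⟩ := descend N T hT [] T.root_mem (T.counter [])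
      (by omega) le_rfl hlen
    have hpow2 : 0 < (2 : ℕ) ^ k := pow_pos (by norm_num) _
    have hv2 : 2 ^ k < T.counter v := by
      have h2 : (2 : ℕ) ^ (k + 1) = 2 * 2 ^ k := by ring
      rcases hbd with h3 | h3 <;> omega
    have hsub := subtree_isRT hT hv
    have hcnt : (T.subtree v hv).counter [] = T.counter v := by
      show T.counter (v ++ []) = T.counter v
      rw [List.append_nil]
    obtain ⟨w', hw0, hwmem, hwst⟩ := ih (T.subtree v hv) hsub (by rw [hcnt]; exact hv2)
    refine ⟨fun i => Nat.casesOn i [] (fun j => v ++ w' j), rfl, ?_, ?_⟩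
    · intro i hi
      cases i with
      | zero => exact T.root_mem
      | succ j => exact hwmem j (by omega)
    · intro i hi
      cases i with
      | zero =>
        constructor
        · show StrictPrefix [] (v ++ w' 0)
          rw [hw0, List.append_nil]
          exact hsp
        · show T.counter (v ++ w' 0) < T.counter []
          rw [hw0, List.append_nil]
          exact hlt
      | succ j =>
        obtain ⟨⟨hp, hne⟩, hcc⟩ := hwst j (by omega)
        refine ⟨⟨?_, ?_⟩, ?_⟩
        · show v ++ w' j <+: v ++ w' (j + 1)
          exact (List.prefix_append_right_inj v).2 hp
        · show v ++ w' j ≠ v ++ w' (j + 1)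
          intro hcontra
          exact hne (List.append_cancel_left hcontra)
        · show T.counter (v ++ w' (j + 1)) < T.counter (v ++ w' j)
          exact hcc

lemma exists_pair {B : BVASS1 Q} [Fintype Q] {T : BTree Q} (hT : B.IsRT T)
    (h : 2 ^ Fintype.card Q < T.counter []) :
    ∃ a b : List Bool, a ∈ T.dom ∧ b ∈ T.dom ∧ StrictPrefix a b ∧
      T.state a = T.state b ∧ T.counter b < T.counter a := by
  obtain ⟨w, hw0, hmem, hstep⟩ := chain (Fintype.card Q) T hT h
  have key : ∀ j i, i < j → j ≤ Fintype.card Q →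
      StrictPrefix (w i) (w j) ∧ T.counter (w j) < T.counter (w i) := by
    intro j
    induction j with
    | zero => intro i hi _; exact absurd hi (by omega)
    | succ j ihj =>
      intro i hi hj
      rcases Nat.lt_or_ge i j with h' | h'
      · obtain ⟨hsp1, hc1⟩ := ihj i h' (by omega)
        obtain ⟨hsp2, hc2⟩ := hstep j (by omega)
        exact ⟨sp_trans hsp1 hsp2, by omega⟩
      · have hij : i = j := by omega
        subst hij
        exact hstep i (by omega)
  obtain ⟨a, b, hab, heq⟩ := Fintype.exists_ne_map_eq_of_card_lt
    (fun i : Fin (Fintype.card Q + 1) => T.state (w i))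
    (by simp only [Fintype.card_fin]; omega)
  have ha' := a.isLt
  have hb' := b.isLt
  rcases Nat.lt_or_ge (a : ℕ) (b : ℕ) with h' | h'
  · obtain ⟨hsp, hc⟩ := key b a h' (by omega)
    exact ⟨w a, w b, hmem a (by omega), hmem b (by omega), hsp, heq, hc⟩
  · have h'' : (b : ℕ) < (a : ℕ) := by
      rcases Nat.lt_or_ge (b : ℕ) (a : ℕ) with h2 | h2
      · exact h2
      · exact absurd (Fin.ext (by omega)) hab
    obtain ⟨hsp, hc⟩ := key a b h'' (by omega)
    exact ⟨w b, w a, hmem b (by omega), hmem a (by omega), hsp, heq.symm, hc⟩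

lemma pump {B : BVASS1 Q} {S : BTree Q} (hS : B.IsRT S) {p : List Bool} (hp : p ∈ S.dom)
    (hst : S.state p = S.state []) {d : ℕ} (hd : S.counter [] = S.counter p + d) :
    ∀ k : ℕ, ∃ S' : BTree Q, B.IsRT S' ∧
      S'.label [] = (S.state [], S.counter [] + k * d) := by
  intro k
  induction k with
  | zero =>
    refine ⟨S, hS, ?_⟩
    have hl : S.label [] = (S.state [], S.counter []) := rfl
    rw [hl]
    simp
  | succ k ih =>
    obtain ⟨S', hS', hlab⟩ := ih
    have h1 : S'.state [] = S.state [] := by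
      show (S'.label []).1 = _
      rw [hlab]
    have hst' : S'.state [] = S.state p := h1.trans hst.symm
    have hct' : S'.counter [] = S.counter p + (k * d + d) := by
      have h2 : S'.counter [] = S.counter [] + k * d := by
        show (S'.label []).2 = _
        rw [hlab]
      omega
    refine ⟨graft S p S' (k * d + d) hp, graft_isRT hS hS' hst' hct', ?_⟩
    rw [graft_root_label hst' hct']
    congr 1
    ring

end Stmt6Aux

/-- A state is unbounded iff its reachability set contains a value exceeding `2^|Q|`. -/
theorem stmt6 {Q : Type} [Fintype Q] (B : BVASS1 Q) (q : Q) :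
    (B.reachSet q).Infinite ↔ ∃ n ∈ B.reachSet q, 2 ^ Fintype.card Q < n := by
  constructor
  · intro h
    by_contra hc
    push_neg at hc
    exact h ((Set.finite_Iic (2 ^ Fintype.card Q)).subset fun n hn => hc n hn)
  · rintro ⟨n, hn, hgt⟩
    obtain ⟨T, hT, hlab⟩ := hn
    have hq : T.state [] = q := congrArg Prod.fst hlab
    have hn' : T.counter [] = n := congrArg Prod.snd hlab
    obtain ⟨a, b, ha, hb, hsp, hstab, hcab⟩ :=
      Stmt6Aux.exists_pair hT (by rw [hn']; exact hgt)
    obtain ⟨p, rfl⟩ := hsp.1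
    have hSrt := Stmt6Aux.subtree_isRT hT ha
    have hpS : p ∈ (T.subtree a ha).dom := hb
    have hlabS0 : (T.subtree a ha).label [] = T.label a := by
      show T.label (a ++ []) = T.label a
      rw [List.append_nil]
    have hstS : (T.subtree a ha).state p = (T.subtree a ha).state [] := by
      have h1 : (T.subtree a ha).state p = T.state (a ++ p) := rfl
      have h2 : (T.subtree a ha).state [] = T.state a := congrArg Prod.fst hlabS0
      rw [h1, h2]
      exact hstab.symm
    set d := T.counter a - T.counter (a ++ p) with hddef
    have hdpos : 0 < d := by omega
    have hdS : (T.subtree a ha).counter [] = (T.subtree a ha).counter p + d := by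
      have h1 : (T.subtree a ha).counter p = T.counter (a ++ p) := rfl
      have h2 : (T.subtree a ha).counter [] = T.counter a := congrArg Prod.snd hlabS0
      omega
    have hreach : ∀ k : ℕ, (n + k * d) ∈ B.reachSet q := by
      intro k
      obtain ⟨S', hS', hlabS'⟩ := Stmt6Aux.pump hSrt hpS hstS hdS k
      have hstS' : S'.state [] = T.state a := by
        have h3 : S'.state [] = (T.subtree a ha).state [] := by
          show (S'.label []).1 = _
          rw [hlabS']
        have h2 : (T.subtree a ha).state [] = T.state a := congrArg Prod.fst hlabS0
        exact h3.trans h2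
      have hctS' : S'.counter [] = T.counter a + k * d := by
        have h3 : S'.counter [] = (T.subtree a ha).counter [] + k * d := by
          show (S'.label []).2 = _
          rw [hlabS']
        have h2 : (T.subtree a ha).counter [] = T.counter a := congrArg Prod.snd hlabS0
        omega
      show ∃ T' : BTree Q, B.IsRT T' ∧ T'.label [] = (q, n + k * d)
      refine ⟨Stmt6Aux.graft T a S' (k * d) ha,
        Stmt6Aux.graft_isRT hT hS' hstS' hctS', ?_⟩
      rw [Stmt6Aux.graft_root_label hstS' hctS', hq, hn']
    have hinj : Function.Injective (fun k : ℕ => n + k * d) := by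
      intro k1 k2 hk
      simp only [add_right_inj] at hk
      exact Nat.eq_of_mul_eq_mul_right hdpos hk
    exact Set.infinite_of_injective_forall_mem hinj hreach
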